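/- For a weighted graph G with nonnegative symmetric weights, the Laplacian centrality of vertex v decomposes as E_L(G) − E_L(G_v) = d_v² + ∑_{u ≠ v} (2 w(u,v) d_u − w(u,v)²) + 2 ∑_{u ≠ v} w(u,v)² where d_u denotes the weighted degree of u in G. -/
import Mathlib


theorem stmt_13 (n : ℕ) (w : Fin n → Fin n → ℝ)
    (hsymm : ∀ u v, w u v = w v u) (hnonneg : ∀ u v, 0 ≤ w u v)
    (hdiag : ∀ u, w u u = 0)
    (d : Fin n → ℝ) (hd : ∀ u, d u = ∑ v, w u v)
    (v : Fin n)
    (wv : Fin n → Fin n → ℝ)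
    (hwv : ∀ a b, wv a b = if a = v ∨ b = v then 0 else w a b)
    (E : (Fin n → Fin n → ℝ) → ℝ)
    (hE : ∀ W : Fin n → Fin n → ℝ, E W =
      ∑ a, (∑ b, W a b) ^ 2 + 2 * ∑ a, ∑ b ∈ Finset.univ.filter (a < ·), (W a b) ^ 2) :
    E w - E wv =
      (d v) ^ 2 + ∑ u ∈ Finset.univ.filter (· ≠ v), (2 * w u v * d u - (w u v) ^ 2)
        + 2 * ∑ u ∈ Finset.univ.filter (· ≠ v), (w u v) ^ 2 := by
  classical
  have hrow : ∀ a, (∑ b, wv a b) = if a = v then 0 else d a - w a v := by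
    intro a
    by_cases h : a = v
    · simp [h, hwv]
    · simp only [hwv, h, false_or, if_neg h]
      have h2 : ∀ b : Fin n, (if b = v then (0:ℝ) else w a b)
          = w a b - (if b = v then w a b else 0) := by
        intro b; split <;> simp
      rw [Finset.sum_congr rfl fun b _ => h2 b, Finset.sum_sub_distrib,
        Finset.sum_ite_eq' Finset.univ v (w a)]
      simp [hd]
  have hA : ∑ a, (∑ b, w a b) ^ 2 - ∑ a, (∑ b, wv a b) ^ 2
      = (d v) ^ 2 + ∑ u ∈ Finset.univ.filter (· ≠ v), (2 * w u v * d u - (w u v) ^ 2) := by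
    rw [← Finset.sum_sub_distrib]
    have hterm : ∀ a, (∑ b, w a b) ^ 2 - (∑ b, wv a b) ^ 2
        = if a = v then (d v) ^ 2 else (2 * w a v * d a - (w a v) ^ 2) := by
      intro a
      rw [hrow a, ← hd a]
      by_cases h : a = v
      · simp [h]
      · rw [if_neg h, if_neg h]; ring
    rw [Finset.sum_congr rfl fun a _ => hterm a]
    have h3 : ∀ a : Fin n,
        (if a = v then (d v) ^ 2 else (2 * w a v * d a - (w a v) ^ 2))
        = (if a = v then (d v) ^ 2 else 0)
          + (if a ≠ v then (2 * w a v * d a - (w a v) ^ 2) else 0) := by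
      intro a; by_cases h : a = v <;> simp [h]
    rw [Finset.sum_congr rfl fun a _ => h3 a, Finset.sum_add_distrib,
      Finset.sum_ite_eq' Finset.univ v (fun _ => (d v) ^ 2), ← Finset.sum_filter]
    simp
  have hB : ∑ a, ∑ b ∈ Finset.univ.filter (a < ·), (w a b) ^ 2
      - ∑ a, ∑ b ∈ Finset.univ.filter (a < ·), (wv a b) ^ 2
      = ∑ u ∈ Finset.univ.filter (· ≠ v), (w u v) ^ 2 := by
    rw [← Finset.sum_sub_distrib]
    have hterm : ∀ a, (∑ b ∈ Finset.univ.filter (a < ·), (w a b) ^ 2)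
        - ∑ b ∈ Finset.univ.filter (a < ·), (wv a b) ^ 2
        = (if a = v then ∑ b ∈ Finset.univ.filter (v < ·), (w b v) ^ 2 else 0)
          + (if a < v then (w a v) ^ 2 else 0) := by
      intro a
      by_cases h : a = v
      · subst h
        rw [if_pos rfl, if_neg (lt_irrefl a), add_zero]
        have h0 : ∀ b ∈ Finset.univ.filter (a < ·), (wv a b) ^ 2 = 0 := by
          intro b _; simp [hwv]
        rw [Finset.sum_congr rfl h0, Finset.sum_const_zero, sub_zero]
        exact Finset.sum_congr rfl fun b _ => by rw [hsymm]
      · rw [if_neg h, zero_add, ← Finset.sum_sub_distrib]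
        have h2 : ∀ b ∈ Finset.univ.filter (a < ·), (w a b) ^ 2 - (wv a b) ^ 2
            = if b = v then (w a b) ^ 2 else 0 := by
          intro b _
          rw [hwv]; by_cases hb : b = v <;> simp [hb, h]
        rw [Finset.sum_congr rfl h2,
          Finset.sum_ite_eq' (Finset.univ.filter (a < ·)) v (fun b => (w a b) ^ 2)]
        simp
    rw [Finset.sum_congr rfl fun a _ => hterm a, Finset.sum_add_distrib,
      Finset.sum_ite_eq' Finset.univ v
        (fun _ => ∑ b ∈ Finset.univ.filter (v < ·), (w b v) ^ 2)]
    have hsplit : Finset.univ.filter (· ≠ v)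
        = Finset.univ.filter (· < v) ∪ Finset.univ.filter (v < ·) := by
      ext u
      simp only [Finset.mem_filter, Finset.mem_union, Finset.mem_univ, true_and]
      exact ne_iff_lt_or_gt
    have hdisj : Disjoint (Finset.univ.filter (· < v)) (Finset.univ.filter (v < ·)) := by
      simp only [Finset.disjoint_left, Finset.mem_filter, Finset.mem_univ, true_and]
      intro a h1 h2; exact absurd h2 (not_lt_of_gt h1)
    rw [hsplit, Finset.sum_union hdisj]
    simp only [Finset.mem_univ, if_true]
    rw [← Finset.sum_filter]
    ring
  rw [hE, hE]
  linarith [hA, hB]
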